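/- arXiv:1806.04246 — 5 statements merged into one kernel-verified Lean document; each statement's English description precedes it below -/
import Mathlib

section
/- Let c ∈ (0, 1/4) and a ∈ (1/2, 1/2 + √(1/4 − c)). Define f(x) = √(1−x) − √(1 − x − c/x). Then for every x ∈ [1/2, a], f(x) ≤ max(f(1/2), f(a)). -/
private lemma sqrt_comp_concave {s : Set ℝ} {q : ℝ → ℝ} (hq : ConcaveOn ℝ s q)
    (h0 : ∀ x ∈ s, 0 ≤ q x) : ConcaveOn ℝ s fun x => Real.sqrt (q x) := by
  refine ⟨hq.1, fun x hx y hy a b ha hb hab => ?_⟩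
  calc a • Real.sqrt (q x) + b • Real.sqrt (q y)
      ≤ Real.sqrt (a • q x + b • q y) :=
        Real.strictConcaveOn_sqrt.concaveOn.2 (Set.mem_Ici.2 (h0 x hx))
          (Set.mem_Ici.2 (h0 y hy)) ha hb hab
    _ ≤ Real.sqrt (q (a • x + b • y)) := Real.sqrt_le_sqrt (hq.2 hx hy ha hb hab)

private lemma cubic_concave (c a : ℝ) :
    ConcaveOn ℝ (Set.Icc (1/2 : ℝ) a) (fun x => x^2 - x^3 - c*x) := by
  refine ⟨convex_Icc _ _, fun x hx y hy p q hp hq hpq => ?_⟩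
  simp only [smul_eq_mul]
  have hq' : q = 1 - p := by linarith
  subst hq'
  have h1 : 0 ≤ (1+p)*x + (2-p)*y - 1 := by nlinarith [hx.1, hy.1]
  have hid : (p*x + (1-p)*y)^2 - (p*x + (1-p)*y)^3 - c*(p*x + (1-p)*y)
      - (p*(x^2 - x^3 - c*x) + (1-p)*(y^2 - y^3 - c*y))
      = p*(1-p)*(x-y)^2*((1+p)*x + (2-p)*y - 1) := by ring
  nlinarith [mul_nonneg (mul_nonneg (mul_nonneg hp hq) (sq_nonneg (x-y))) h1, hid]

theorem stmt0 (c a : ℝ) (hc : c ∈ Set.Ioo (0 : ℝ) (1/4))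
    (ha : a ∈ Set.Ioo (1/2 : ℝ) (1/2 + Real.sqrt (1/4 - c)))
    (f : ℝ → ℝ) (hf : ∀ x, f x = Real.sqrt (1 - x) - Real.sqrt (1 - x - c / x)) :
    ∀ x ∈ Set.Icc (1/2 : ℝ) a, f x ≤ max (f (1/2)) (f a) := by
  obtain ⟨hc0, hc4⟩ := hc
  obtain ⟨ha1, ha2⟩ := ha
  have hs : Real.sqrt (1/4 - c) ^ 2 = 1/4 - c :=
    Real.sq_sqrt (by linarith)
  have hsnn : 0 ≤ Real.sqrt (1/4 - c) := Real.sqrt_nonneg _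
  have ha_lt_one : a < 1 := by nlinarith
  set D : ℝ → ℝ := fun x => Real.sqrt (x^2 - x^3 - 0*x) + Real.sqrt (x^2 - x^3 - c*x) with hD
  -- nonnegativity facts on the interval
  have hq0 : ∀ x ∈ Set.Icc (1/2 : ℝ) a, 0 ≤ x - x^2 - c := by
    intro x hx
    obtain ⟨h1, h2⟩ := hx
    nlinarith [sq_nonneg (a - x)]
  have hqc : ∀ x ∈ Set.Icc (1/2 : ℝ) a, 0 ≤ x^2 - x^3 - c*x := by
    intro x hx
    have := hq0 x hx
    nlinarith [hx.1]
  have hq00 : ∀ x ∈ Set.Icc (1/2 : ℝ) a, 0 ≤ x^2 - x^3 - 0*x := by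
    intro x hx
    have := hx.1
    nlinarith [hx.2]
  -- D is concave
  have hDconc : ConcaveOn ℝ (Set.Icc (1/2 : ℝ) a) D :=
    (sqrt_comp_concave (cubic_concave 0 a) hq00).add
      (sqrt_comp_concave (cubic_concave c a) hqc)
  -- identity f y * D y = c and D y > 0 on the interval
  have key : ∀ y ∈ Set.Icc (1/2 : ℝ) a, 0 < D y ∧ f y = c / D y := by
    intro y hy
    obtain ⟨hy1, hy2⟩ := hy
    have hy0 : 0 < y := by linarith
    have hylt1 : y < 1 := lt_of_le_of_lt hy2 ha_lt_one
    have h1y : 0 ≤ 1 - y := by linarith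
    have hby : 0 ≤ 1 - y - c / y := by
      have h := hq0 y ⟨hy1, hy2⟩
      have e : 1 - y - c / y = (y - y^2 - c) / y := by field_simp
      rw [e]
      exact div_nonneg h hy0.le
    have e1 : Real.sqrt (y^2 - y^3 - 0*y) = y * Real.sqrt (1 - y) := by
      rw [show y^2 - y^3 - 0*y = y^2 * (1 - y) by ring, Real.sqrt_mul (sq_nonneg y),
        Real.sqrt_sq hy0.le]
    have e2 : Real.sqrt (y^2 - y^3 - c*y) = y * Real.sqrt (1 - y - c / y) := by
      rw [show y^2 - y^3 - c*y = y^2 * (1 - y - c / y) by field_simp,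
        Real.sqrt_mul (sq_nonneg y), Real.sqrt_sq hy0.le]
    have hA : Real.sqrt (1 - y) ^ 2 = 1 - y := Real.sq_sqrt h1y
    have hB : Real.sqrt (1 - y - c / y) ^ 2 = 1 - y - c / y := Real.sq_sqrt hby
    have hApos : 0 < Real.sqrt (1 - y) := Real.sqrt_pos.2 (by linarith)
    have hBnn : 0 ≤ Real.sqrt (1 - y - c / y) := Real.sqrt_nonneg _
    have hDpos : 0 < D y := by
      simp only [hD, e1, e2]
      positivity
    refine ⟨hDpos, ?_⟩
    have hmul : f y * D y = c := by
      simp only [hD, e1, e2, hf]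
      have : (Real.sqrt (1 - y) - Real.sqrt (1 - y - c / y)) *
          (y * Real.sqrt (1 - y) + y * Real.sqrt (1 - y - c / y))
          = y * (Real.sqrt (1 - y) ^ 2 - Real.sqrt (1 - y - c / y) ^ 2) := by ring
      rw [this, hA, hB]
      field_simp
      ring
    field_simp [ne_of_gt hDpos] at hmul ⊢
    linarith [hmul]
  -- conclude
  intro x hx
  have h12 : (1/2 : ℝ) ∈ Set.Icc (1/2 : ℝ) a := ⟨le_refl _, by linarith⟩
  have haa : a ∈ Set.Icc (1/2 : ℝ) a := ⟨by linarith, le_refl _⟩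
  have hmin := hDconc.min_le_of_mem_Icc h12 haa hx
  obtain ⟨hDx, hfx⟩ := key x hx
  obtain ⟨hD12, hf12⟩ := key _ h12
  obtain ⟨hDa, hfa⟩ := key _ haa
  rcases min_le_iff.1 hmin with h | h
  · refine le_max_of_le_left ?_
    rw [hfx, hf12]
    gcongr
  · refine le_max_of_le_right ?_
    rw [hfx, hfa]
    gcongr
end

section
/- For every ρ ∈ (0, π/2), the function f(x) = arccot(cos ρ · tan x) is concave on the interval (0, π/2). -/
/-- The inverse cotangent, taking values in `(0, π)`. -/
noncomputable def arccot (x : ℝ) : ℝ := Real.pi / 2 - Real.arctan x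

theorem stmt2 (ρ : ℝ) (hρ : ρ ∈ Set.Ioo 0 (Real.pi / 2)) :
    ConcaveOn ℝ (Set.Ioo 0 (Real.pi / 2))
      (fun x => arccot (Real.cos ρ * Real.tan x)) := by
  obtain ⟨hρ0, hρ1⟩ := hρ
  set c := Real.cos ρ with hc
  have hc0 : 0 < c := Real.cos_pos_of_mem_Ioo ⟨by linarith [Real.pi_pos], hρ1⟩
  have hc1 : c < 1 := by
    have := Real.cos_lt_cos_of_nonneg_of_le_pi (le_refl 0)
      (by linarith [Real.pi_pos]) hρ0
    simpa using this
  set g : ℝ → ℝ := fun x => Real.cos x ^ 2 + c ^ 2 * Real.sin x ^ 2 with hgdef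
  have hg : ∀ x, 0 < g x := by
    intro x
    have h1 := Real.sin_sq_add_cos_sq x
    have h2 : c ^ 2 ≤ g x := by
      show c ^ 2 ≤ Real.cos x ^ 2 + c ^ 2 * Real.sin x ^ 2
      nlinarith [mul_nonneg (sq_nonneg (Real.cos x))
        (sub_nonneg.mpr (by nlinarith : c ^ 2 ≤ 1))]
    nlinarith
  have hderiv : ∀ x ∈ Set.Ioo 0 (Real.pi / 2), HasDerivAt
      (fun x => arccot (c * Real.tan x)) (-c / g x) x := by
    intro x hx
    have hcos : 0 < Real.cos x := Real.cos_pos_of_mem_Ioo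
      ⟨by linarith [Real.pi_pos, hx.1], hx.2⟩
    have htan : HasDerivAt Real.tan (1 / Real.cos x ^ 2) x :=
      Real.hasDerivAt_tan hcos.ne'
    have h1 : HasDerivAt (fun x => c * Real.tan x) (c * (1 / Real.cos x ^ 2)) x :=
      htan.const_mul c
    have h2 := (Real.hasDerivAt_arctan (c * Real.tan x)).comp x h1
    have h3 := h2.const_sub (Real.pi / 2)
    have heq : -(1 / (1 + (c * Real.tan x) ^ 2) * (c * (1 / Real.cos x ^ 2))) = -c / g x := by
      rw [Real.tan_eq_sin_div_cos]
      have h1 := Real.sin_sq_add_cos_sq x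
      field_simp [hgdef]
      ring_nf
      have hgx : g x = Real.cos x ^ 2 + c ^ 2 * Real.sin x ^ 2 := rfl
      have hgi : (Real.cos x ^ 2 + c ^ 2 * Real.sin x ^ 2) * (g x)⁻¹ = 1 := by
        rw [← hgx]; exact mul_inv_cancel₀ (hg x).ne'
      linear_combination hgi
    rw [heq] at h3
    exact h3
  have hcont : ContinuousOn (fun x => arccot (c * Real.tan x)) (Set.Ioo 0 (Real.pi / 2)) :=
    fun x hx => ((hderiv x hx).differentiableAt).continuousAt.continuousWithinAt
  refine (strictConcaveOn_of_deriv2_neg (convex_Ioo _ _) hcont ?_).concaveOn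
  intro x hx
  rw [interior_Ioo] at hx
  have hcos : 0 < Real.cos x := Real.cos_pos_of_mem_Ioo
    ⟨by linarith [Real.pi_pos, hx.1], hx.2⟩
  have hsin : 0 < Real.sin x := Real.sin_pos_of_pos_of_lt_pi hx.1
    (by linarith [Real.pi_pos, hx.2])
  -- deriv f = -c / g on a neighborhood of x
  have hev : deriv (fun x => arccot (c * Real.tan x)) =ᶠ[nhds x] (fun x => -c / g x) := by
    filter_upwards [isOpen_Ioo.mem_nhds hx] with y hy
    exact (hderiv y hy).deriv
  have hg' : HasDerivAt g (2 * Real.sin x * Real.cos x * (c ^ 2 - 1)) x := by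
    have h1 : HasDerivAt (fun x => Real.cos x ^ 2) (2 * Real.cos x ^ 1 * (-Real.sin x)) x :=
      (Real.hasDerivAt_cos x).pow 2
    have h2 : HasDerivAt (fun x => c ^ 2 * Real.sin x ^ 2)
        (c ^ 2 * (2 * Real.sin x ^ 1 * Real.cos x)) x :=
      ((Real.hasDerivAt_sin x).pow 2).const_mul (c ^ 2)
    have : HasDerivAt (fun x => Real.cos x ^ 2 + c ^ 2 * Real.sin x ^ 2) _ x := h1.add h2
    convert this using 1
    ring
  have hh : HasDerivAt (fun x => -c / g x)
      ((0 * g x - (-c) * (2 * Real.sin x * Real.cos x * (c ^ 2 - 1))) / g x ^ 2) x :=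
    (hasDerivAt_const x (-c)).div hg' (hg x).ne'
  have key : deriv^[2] (fun x => arccot (c * Real.tan x)) x
      = c * (2 * Real.sin x * Real.cos x * (c ^ 2 - 1)) / g x ^ 2 := by
    simp only [Function.iterate_succ, Function.iterate_zero, Function.comp_apply, id]
    rw [hev.deriv_eq, hh.deriv]
    ring
  rw [key]
  apply div_neg_of_neg_of_pos
  · have hp : 0 < c * (2 * Real.sin x * Real.cos x) :=
      mul_pos hc0 (by positivity)
    have hlt : c ^ 2 - 1 < 0 := by nlinarith
    have heq2 : c * (2 * Real.sin x * Real.cos x * (c ^ 2 - 1))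
        = c * (2 * Real.sin x * Real.cos x) * (c ^ 2 - 1) := by ring
    rw [heq2]
    exact mul_neg_of_pos_of_neg hp hlt
  · positivity
end

section
/- For every ρ ∈ (0, π/2) and all α, β ∈ (0, π/2), arccot(cos ρ · tan((α+β)/2)) ≥ (arccot(cos ρ · tan α) + arccot(cos ρ · tan β)) / 2. -/
open Real Set

lemma denom_pos {c : ℝ} (hc : 0 < c) (x : ℝ) : 0 < Real.cos x ^ 2 + c ^ 2 * Real.sin x ^ 2 := by
  nlinarith [Real.sin_sq_add_cos_sq x, sq_nonneg (Real.cos x),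
    mul_nonneg (mul_pos hc hc).le (sq_nonneg (Real.sin x)),
    mul_nonneg (mul_pos hc hc).le (sq_nonneg (Real.cos x)),
    mul_pos (mul_pos hc hc) (by nlinarith [Real.sin_sq_add_cos_sq x, sq_nonneg (Real.sin x - Real.cos x)] : (0:ℝ) < 1)]

lemma hasDerivAt_g {c : ℝ} (hc : 0 < c) {x : ℝ} (hx : Real.cos x ≠ 0) :
    HasDerivAt (fun y => Real.arctan (c * Real.tan y))
      (c / (Real.cos x ^ 2 + c ^ 2 * Real.sin x ^ 2)) x := by
  have h1 : HasDerivAt (fun y => c * Real.tan y) (c * (1 / Real.cos x ^ 2)) x :=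
    (Real.hasDerivAt_tan hx).const_mul c
  have h2 := (Real.hasDerivAt_arctan (c * Real.tan x)).comp x h1
  refine h2.congr_deriv ?_
  rw [Real.tan_eq_sin_div_cos]
  have hD := denom_pos hc x
  field_simp

lemma convex_g {c : ℝ} (hc0 : 0 < c) (hc1 : c < 1) :
    ConvexOn ℝ (Set.Ioo 0 (Real.pi/2)) (fun x => Real.arctan (c * Real.tan x)) := by
  set g : ℝ → ℝ := fun x => Real.arctan (c * Real.tan x) with hg
  set h : ℝ → ℝ := fun x => c / (Real.cos x ^ 2 + c ^ 2 * Real.sin x ^ 2) with hh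
  have hint : interior (Set.Ioo 0 (Real.pi/2)) = Set.Ioo 0 (Real.pi/2) :=
    isOpen_Ioo.interior_eq
  have hcos : ∀ x ∈ Set.Ioo 0 (Real.pi/2), 0 < Real.cos x := fun x hx =>
    Real.cos_pos_of_mem_Ioo ⟨by linarith [hx.1, Real.pi_pos], hx.2⟩
  have hU : IsOpen {y : ℝ | Real.cos y ≠ 0} :=
    isOpen_compl_singleton.preimage Real.continuous_cos
  have hderiv_eq : ∀ y, Real.cos y ≠ 0 → deriv g y = h y := fun y hy =>
    (hasDerivAt_g hc0 hy).deriv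
  -- h is differentiable with explicit derivative
  have hDd : ∀ x : ℝ, HasDerivAt (fun y => Real.cos y ^ 2 + c ^ 2 * Real.sin y ^ 2)
      (2 * Real.cos x ^ 1 * (-Real.sin x) + c ^ 2 * (2 * Real.sin x ^ 1 * Real.cos x)) x := by
    intro x
    exact (((Real.hasDerivAt_cos x).pow 2)).add
      (((Real.hasDerivAt_sin x).pow 2).const_mul (c ^ 2))
  have hhd : ∀ x : ℝ, HasDerivAt h
      ((0 * (Real.cos x ^ 2 + c ^ 2 * Real.sin x ^ 2) -
        c * (2 * Real.cos x ^ 1 * (-Real.sin x) + c ^ 2 * (2 * Real.sin x ^ 1 * Real.cos x))) /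
        (Real.cos x ^ 2 + c ^ 2 * Real.sin x ^ 2) ^ 2) x := by
    intro x
    exact (hasDerivAt_const x c).div (hDd x) (denom_pos hc0 x).ne'
  refine convexOn_of_deriv2_nonneg (convex_Ioo _ _) ?_ ?_ ?_ ?_
  · intro x hx
    exact (hasDerivAt_g hc0 (hcos x hx).ne').differentiableAt.continuousAt.continuousWithinAt
  · rw [hint]
    intro x hx
    exact (hasDerivAt_g hc0 (hcos x hx).ne').differentiableAt.differentiableWithinAt
  · rw [hint]
    intro x hx
    have hev : deriv g =ᶠ[nhds x] h :=
      Filter.eventuallyEq_of_mem (hU.mem_nhds (hcos x hx).ne') (fun y hy => hderiv_eq y hy)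
    exact ((hhd x).differentiableAt.congr_of_eventuallyEq hev).differentiableWithinAt
  · rw [hint]
    intro x hx
    have hev : deriv g =ᶠ[nhds x] h :=
      Filter.eventuallyEq_of_mem (hU.mem_nhds (hcos x hx).ne') (fun y hy => hderiv_eq y hy)
    have h2 : deriv^[2] g x = deriv h x := by
      show deriv (deriv g) x = deriv h x
      exact hev.deriv_eq
    rw [h2, (hhd x).deriv]
    have hs : 0 ≤ Real.sin x := Real.sin_nonneg_of_nonneg_of_le_pi (le_of_lt hx.1)
      (by linarith [hx.2, Real.pi_pos])
    have hcx := hcos x hx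
    apply div_nonneg
    · have h1 : 0 ≤ 1 - c ^ 2 := by nlinarith
      nlinarith [mul_nonneg (mul_nonneg (mul_nonneg hc0.le hs) hcx.le) h1]
    · positivity


theorem stmt3 (ρ α β : ℝ) (hρ : ρ ∈ Set.Ioo 0 (Real.pi / 2))
    (hα : α ∈ Set.Ioo 0 (Real.pi / 2)) (hβ : β ∈ Set.Ioo 0 (Real.pi / 2)) :
    arccot (Real.cos ρ * Real.tan ((α + β) / 2)) ≥
      (arccot (Real.cos ρ * Real.tan α) + arccot (Real.cos ρ * Real.tan β)) / 2 := by
  have hc0 : 0 < Real.cos ρ :=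
    Real.cos_pos_of_mem_Ioo ⟨by linarith [hρ.1, Real.pi_pos], hρ.2⟩
  have hc1 : Real.cos ρ < 1 := by
    calc Real.cos ρ < Real.cos 0 := by
          apply Real.cos_lt_cos_of_nonneg_of_le_pi le_rfl ?_ hρ.1
          linarith [hρ.2, Real.pi_pos]
      _ = 1 := Real.cos_zero
  have hcv := convex_g hc0 hc1
  have key := hcv.2 hα hβ (by norm_num : (0:ℝ) ≤ 1/2) (by norm_num : (0:ℝ) ≤ 1/2)
    (by norm_num : (1:ℝ)/2 + 1/2 = 1)
  simp only [smul_eq_mul] at key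
  have hm : (1:ℝ)/2 * α + 1/2 * β = (α + β) / 2 := by ring
  rw [hm] at key
  unfold arccot
  linarith
end

section
/- For every Δ ∈ (0, π/2), one has (√(9 + 8 tan²Δ) − 3)/(2 tan Δ) < (√(2 + 2 tan²Δ) − √2)/tan Δ. -/
theorem stmt4 (Δ : ℝ) (hΔ : Δ ∈ Set.Ioo 0 (Real.pi / 2)) :
    (Real.sqrt (9 + 8 * Real.tan Δ ^ 2) - 3) / (2 * Real.tan Δ) <
      (Real.sqrt (2 + 2 * Real.tan Δ ^ 2) - Real.sqrt 2) / Real.tan Δ := by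
  obtain ⟨h1, h2⟩ := hΔ
  have ht : 0 < Real.tan Δ := Real.tan_pos_of_pos_of_lt_pi_div_two h1 h2
  set t := Real.tan Δ with htdef
  have ht2 : 0 < t ^ 2 := by positivity
  set a := Real.sqrt (9 + 8 * t ^ 2) with ha
  set b := Real.sqrt (2 + 2 * t ^ 2) with hb
  set c := Real.sqrt 2 with hc
  have ha2 : a ^ 2 = 9 + 8 * t ^ 2 := Real.sq_sqrt (by positivity)
  have hb2 : b ^ 2 = 2 + 2 * t ^ 2 := Real.sq_sqrt (by positivity)
  have hc2 : c ^ 2 = 2 := Real.sq_sqrt (by norm_num)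
  have ha0 : 0 ≤ a := Real.sqrt_nonneg _
  have hb0 : 0 ≤ b := Real.sqrt_nonneg _
  have hc0 : 0 ≤ c := Real.sqrt_nonneg _
  have hbc : c < b := by
    have : c ^ 2 < b ^ 2 := by nlinarith
    nlinarith
  have key : a + 2 * c < 2 * b + 3 := by
    have hr : 0 < 2 * b + 3 - 2 * c := by nlinarith
    have hsq : a ^ 2 < (2 * b + 3 - 2 * c) ^ 2 := by nlinarith [mul_pos (show (0:ℝ) < 3 - 2 * c by nlinarith) (sub_pos.mpr hbc)]
    nlinarith
  rw [div_lt_div_iff₀ (by positivity) ht]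
  nlinarith [mul_pos ht ht]
end

section
/- Let c ∈ (0, 1/4) and let g(x) = 1 − c/x² − √(1 − c/(x(1−x))) on the interval I = (1/2, 1/2 + √(1/4 − c)). Then g has exactly one zero x₀ in I, g < 0 on (1/2, x₀), and g > 0 on (x₀, 1/2 + √(1/4 − c)). -/
/-- Sign correspondence between g and the cubic h(x) = 3x³ - 2x² + c(1-x) on I. -/
lemma stmt17_sign (c x : ℝ) (hc0 : 0 < c) (hc4 : c < 1/4) (hx1 : 1/2 < x)
    (hx2 : x < 1/2 + Real.sqrt (1/4 - c)) :
    (1 - c / x ^ 2 - Real.sqrt (1 - c / (x * (1 - x))) < 0 ↔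
      3*x^3 - 2*x^2 + c*(1-x) < 0) ∧
    (0 < 1 - c / x ^ 2 - Real.sqrt (1 - c / (x * (1 - x))) ↔
      0 < 3*x^3 - 2*x^2 + c*(1-x)) := by
  have hq : (0:ℝ) ≤ 1/4 - c := by linarith
  have hs : Real.sqrt (1/4 - c) < 1/2 := by
    rw [Real.sqrt_lt' (by norm_num)]; nlinarith
  have hx1' : x < 1 := by linarith
  have hx0 : (0:ℝ) < x := by linarith
  have hxm : (x - 1/2)^2 < 1/4 - c := by
    have h' : x - 1/2 < Real.sqrt (1/4 - c) := by linarith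
    exact (Real.lt_sqrt (by linarith)).mp h'
  have hxc : c < x * (1 - x) := by nlinarith
  have hxx : 0 < x * (1 - x) := by nlinarith
  have ha : 0 < 1 - c / x ^ 2 := by
    rw [sub_pos, div_lt_one (by positivity)]; nlinarith
  have hb : 0 ≤ 1 - c / (x * (1 - x)) := by
    rw [sub_nonneg, div_le_one hxx]; linarith
  have hxne : x ≠ 0 := ne_of_gt hx0
  have hx1ne : 1 - x ≠ 0 := by intro h; nlinarith
  have hkey : (1 - c/x^2)^2 - (1 - c/(x*(1-x))) =
      (c / (x^4 * (1-x))) * (3*x^3 - 2*x^2 + c*(1-x)) := by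
    field_simp
    ring
  have hcoef : 0 < c / (x^4 * (1-x)) := by
    apply div_pos hc0
    have : 0 < 1 - x := by nlinarith
    positivity
  constructor
  · constructor
    · intro h
      have h1 : 1 - c / x ^ 2 < Real.sqrt (1 - c / (x * (1 - x))) := by linarith
      have h2 : (1 - c / x ^ 2)^2 < 1 - c / (x * (1 - x)) :=
        (Real.lt_sqrt ha.le).mp h1
      by_contra hcon
      push_neg at hcon
      linarith [hkey, mul_nonneg hcoef.le hcon]
    · intro h
      have h2 : (1 - c / x ^ 2)^2 < 1 - c / (x * (1 - x)) := by
        linarith [hkey, mul_neg_of_pos_of_neg hcoef h]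
      have := (Real.lt_sqrt ha.le).mpr h2
      linarith
  · constructor
    · intro h
      have h1 : Real.sqrt (1 - c / (x * (1 - x))) < 1 - c / x ^ 2 := by linarith
      have h2 : 1 - c / (x * (1 - x)) < (1 - c / x ^ 2)^2 :=
        (Real.sqrt_lt' ha).mp h1
      by_contra hcon
      push_neg at hcon
      linarith [hkey, mul_nonpos_of_nonneg_of_nonpos hcoef.le hcon]
    · intro h
      have h2 : 1 - c / (x * (1 - x)) < (1 - c / x ^ 2)^2 := by
        linarith [hkey, mul_pos hcoef h]
      have := (Real.sqrt_lt' ha).mpr h2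
      linarith

lemma stmt17_mono (c : ℝ) (hc4 : c < 1/4) :
    StrictMonoOn (fun x : ℝ => 3*x^3 - 2*x^2 + c*(1-x)) (Set.Ici (1/2:ℝ)) := by
  intro x hx y hy hxy
  simp only [Set.mem_Ici] at hx hy
  have hbr : 0 < 3*(x^2+x*y+y^2) - 2*(x+y) - c := by
    nlinarith [sq_nonneg (x - 1/2), sq_nonneg (y - 1/2),
      mul_nonneg (by linarith : (0:ℝ) ≤ x - 1/2) (by linarith : (0:ℝ) ≤ y - 1/2)]
  simp only
  nlinarith [mul_pos (sub_pos.mpr hxy) hbr]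

theorem stmt17 (c : ℝ) (hc : c ∈ Set.Ioo (0 : ℝ) (1/4)) (g : ℝ → ℝ)
    (hg : ∀ x, g x = 1 - c / x ^ 2 - Real.sqrt (1 - c / (x * (1 - x)))) :
    ∃ x₀ ∈ Set.Ioo (1/2 : ℝ) (1/2 + Real.sqrt (1/4 - c)),
      g x₀ = 0 ∧
      (∀ x ∈ Set.Ioo (1/2 : ℝ) (1/2 + Real.sqrt (1/4 - c)), g x = 0 → x = x₀) ∧
      (∀ x ∈ Set.Ioo (1/2 : ℝ) x₀, g x < 0) ∧
      (∀ x ∈ Set.Ioo x₀ (1/2 + Real.sqrt (1/4 - c)), g x > 0) := by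
  obtain ⟨hc0, hc4⟩ := hc
  have hq : (0:ℝ) ≤ 1/4 - c := by linarith
  have hs0 : 0 < Real.sqrt (1/4 - c) := Real.sqrt_pos.mpr (by linarith)
  have hssq : Real.sqrt (1/4 - c) ^ 2 = 1/4 - c := Real.sq_sqrt hq
  set s := Real.sqrt (1/4 - c)
  have hB1 : (1/2:ℝ) < 1/2 + s := by linarith
  have hHcont : Continuous (fun x : ℝ => 3*x^3 - 2*x^2 + c*(1-x)) := by fun_prop
  have hmono := stmt17_mono c hc4
  have hHa : 3*(1/2:ℝ)^3 - 2*(1/2:ℝ)^2 + c*(1-(1/2:ℝ)) < 0 := by nlinarith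
  have hHb : 0 < 3*(1/2+s)^3 - 2*(1/2+s)^2 + c*(1-(1/2+s)) := by
    have hc' : c = 1/4 - s^2 := by linarith
    nlinarith [mul_pos (mul_pos hs0 hs0) hs0, mul_pos hs0 hs0]
  have hIVT := intermediate_value_Ioo hB1.le hHcont.continuousOn
  obtain ⟨x₀, hx₀mem, hx₀⟩ := hIVT ⟨hHa, hHb⟩
  simp only at hx₀
  refine ⟨x₀, hx₀mem, ?_, ?_, ?_, ?_⟩
  · -- g x₀ = 0
    rw [hg]
    have hsgn := stmt17_sign c x₀ hc0 hc4 hx₀mem.1 hx₀mem.2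
    have h1 : ¬ (1 - c / x₀ ^ 2 - Real.sqrt (1 - c / (x₀ * (1 - x₀))) < 0) := by
      rw [hsgn.1]; linarith
    have h2 : ¬ (0 < 1 - c / x₀ ^ 2 - Real.sqrt (1 - c / (x₀ * (1 - x₀)))) := by
      rw [hsgn.2]; linarith
    linarith [not_lt.mp h1, not_lt.mp h2]
  · -- uniqueness
    intro x hx hgx
    rw [hg] at hgx
    have hsgn := stmt17_sign c x hc0 hc4 hx.1 hx.2
    have hHx : 3*x^3 - 2*x^2 + c*(1-x) = 0 := by
      rcases lt_trichotomy (3*x^3 - 2*x^2 + c*(1-x)) 0 with h | h | h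
      · exact absurd (hsgn.1.mpr h) (by rw [hgx]; simp)
      · exact h
      · exact absurd (hsgn.2.mpr h) (by rw [hgx]; simp)
    exact hmono.injOn (Set.mem_Ici.mpr hx.1.le) (Set.mem_Ici.mpr hx₀mem.1.le)
      (hHx.trans hx₀.symm)
  · -- negative on (1/2, x₀)
    intro x hx
    rw [hg]
    have hxB : x < 1/2 + s := lt_trans hx.2 hx₀mem.2
    have hsgn := stmt17_sign c x hc0 hc4 hx.1 hxB
    apply hsgn.1.mpr
    have := hmono (Set.mem_Ici.mpr hx.1.le) (Set.mem_Ici.mpr hx₀mem.1.le) hx.2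
    simp only at this
    linarith
  · -- positive on (x₀, B)
    intro x hx
    rw [hg]
    have hx1 : (1/2:ℝ) < x := lt_trans hx₀mem.1 hx.1
    have hsgn := stmt17_sign c x hc0 hc4 hx1 hx.2
    apply hsgn.2.mpr
    have := hmono (Set.mem_Ici.mpr hx₀mem.1.le) (Set.mem_Ici.mpr hx1.le) hx.1
    simp only at this
    linarith
end
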